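/- Let f : ℝᵈ → ℝ be L-smooth and convex, let η > 0, and fix x ∈ ℝᵈ. Then the ratio of normalization constants ∫exp(-f(x) - ⟨∇f(x), y - x⟩ - ‖y-x‖²/(2η))dy over ∫exp(-f(y) - ‖y-x‖²/(2η))dy is at most (1 + ηL)^{d/2} · exp( (η²L/(2(1+ηL))) · ‖∇f(x)‖² ). -/

import Mathlib

open MeasureTheory
open scoped RealInnerProductSpace

open Real

section aux

variable {d : ℕ}

lemma key_sq (b : ℝ) (hb : 0 < b) (g z : EuclideanSpace ℝ (Fin d)) :
    -⟪g, z⟫ - b * ‖z‖ ^ 2 = -(b * ‖z + (2*b)⁻¹ • g‖ ^ 2) + ‖g‖ ^ 2 / (4*b) := by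
  have hb' : (b : ℝ) ≠ 0 := ne_of_gt hb
  have h : ‖z + (2*b)⁻¹ • g‖ ^ 2
      = ‖z‖ ^ 2 + 2 * ((2*b)⁻¹ * ⟪g, z⟫) + ((2*b)⁻¹) ^ 2 * ‖g‖ ^ 2 := by
    rw [@norm_add_sq_real, real_inner_smul_right, norm_smul, real_inner_comm]
    simp [mul_pow, sq_abs]
  rw [h]
  field_simp
  ring

lemma gauss_eq (b : ℝ) (hb : 0 < b) (g x : EuclideanSpace ℝ (Fin d)) :
    ∫ y : EuclideanSpace ℝ (Fin d), Real.exp (-⟪g, y - x⟫ - b * ‖y - x‖ ^ 2)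
      = (π / b) ^ ((d:ℝ)/2) * Real.exp (‖g‖ ^ 2 / (4*b)) := by
  have h1 : ∀ y : EuclideanSpace ℝ (Fin d),
      Real.exp (-⟪g, y - x⟫ - b * ‖y - x‖ ^ 2)
        = Real.exp (-(b * ‖y + (-(x - (2*b)⁻¹ • g))‖ ^ 2)) * Real.exp (‖g‖ ^ 2 / (4*b)) := by
    intro y
    rw [← Real.exp_add, key_sq b hb g (y - x)]
    congr 3
    abel
  simp_rw [h1]
  rw [integral_mul_const, integral_add_right_eq_self
    (fun y : EuclideanSpace ℝ (Fin d) => Real.exp (-(b * ‖y‖ ^ 2)))]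
  congr 1
  have := GaussianFourier.integral_rexp_neg_mul_sq_norm (V := EuclideanSpace ℝ (Fin d)) hb
  simpa [neg_mul] using this

lemma gauss_integrable (b : ℝ) (hb : 0 < b) (g x : EuclideanSpace ℝ (Fin d)) :
    Integrable (fun y : EuclideanSpace ℝ (Fin d) =>
      Real.exp (-⟪g, y - x⟫ - b * ‖y - x‖ ^ 2)) := by
  have base : Integrable (fun v : EuclideanSpace ℝ (Fin d) => Real.exp (-(b * ‖v‖ ^ 2))) := by
    have h := (GaussianFourier.integrable_cexp_neg_mul_sq_norm_add
      (V := EuclideanSpace ℝ (Fin d)) (b := (b:ℂ)) (by simpa using hb) 0 0).norm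
    refine h.congr (Filter.Eventually.of_forall fun v => ?_)
    have hc : ((-(b * ‖v‖ ^ 2) : ℝ) : ℂ) = -(b:ℂ) * (‖v‖:ℂ) ^ 2 + 0 * ((inner ℝ 0 v : ℝ) : ℂ) := by
      push_cast; ring
    simp only [Complex.norm_exp, ← hc, Complex.ofReal_re]
  have h1 : ∀ y : EuclideanSpace ℝ (Fin d),
      Real.exp (-⟪g, y - x⟫ - b * ‖y - x‖ ^ 2)
        = Real.exp (-(b * ‖y + (-(x - (2*b)⁻¹ • g))‖ ^ 2)) * Real.exp (‖g‖ ^ 2 / (4*b)) := by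
    intro y
    rw [← Real.exp_add, key_sq b hb g (y - x)]
    congr 3
    abel
  have := (base.comp_add_right (-(x - (2*b)⁻¹ • g))).mul_const (Real.exp (‖g‖ ^ 2 / (4*b)))
  exact this.congr (Filter.Eventually.of_forall fun y => (h1 y).symm)

lemma grad_ineq (f : EuclideanSpace ℝ (Fin d) → ℝ)
    (hconv : ConvexOn ℝ Set.univ f) (hdiff : Differentiable ℝ f)
    (x y : EuclideanSpace ℝ (Fin d)) :
    f x + ⟪gradient f x, y - x⟫ ≤ f y := by
  set φ : ℝ → ℝ := fun t => f (x + t • (y - x)) with hφdef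
  have hφ : ConvexOn ℝ Set.univ φ := by
    refine ⟨convex_univ, fun a _ c _ ta tb hta htb hab => ?_⟩
    have hx : x + (ta * a + tb * c) • (y - x)
        = ta • (x + a • (y - x)) + tb • (x + c • (y - x)) := by
      have h1 : tb = 1 - ta := by linarith
      subst h1
      module
    have : φ (ta * a + tb * c) = f (ta • (x + a • (y - x)) + tb • (x + c • (y - x))) := by
      rw [hφdef]
      simp only
      rw [hx]
    simp only [smul_eq_mul]
    rw [this]
    exact hconv.2 (Set.mem_univ _) (Set.mem_univ _) hta htb hab
  have hline : HasDerivAt (fun t : ℝ => x + t • (y - x)) (y - x) 0 := by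
    simpa using ((hasDerivAt_id (0:ℝ)).smul_const (y - x)).const_add x
  have hd : HasDerivAt φ ⟪gradient f x, y - x⟫ 0 := by
    have hf := (hdiff x).hasGradientAt.hasFDerivAt
    have hf' : HasFDerivAt f ((InnerProductSpace.toDual ℝ _) (gradient f x))
        (x + (0:ℝ) • (y - x)) := by simpa using hf
    have hc := hf'.comp_hasDerivAt (0:ℝ) hline
    rw [InnerProductSpace.toDual_apply_apply] at hc
    exact hc
  have hslope := hφ.le_slope_of_hasDerivAt (Set.mem_univ (0:ℝ)) (Set.mem_univ 1)
    zero_lt_one hd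
  have h0 : φ 0 = f x := by simp [hφdef]
  have h1 : φ 1 = f y := by simp [hφdef]
  rw [slope_def_field, h0, h1] at hslope
  simp only [sub_zero, div_one] at hslope
  linarith

end aux


theorem stmt17 {d : ℕ} (f : EuclideanSpace ℝ (Fin d) → ℝ) (L eta : ℝ)
    (hL : 0 < L) (heta : 0 < eta)
    (hconv : ConvexOn ℝ Set.univ f) (hdiff : Differentiable ℝ f)
    (hsm : ∀ x y, f y ≤ f x + ⟪gradient f x, y - x⟫ + L / 2 * ‖y - x‖ ^ 2)
    (x : EuclideanSpace ℝ (Fin d)) :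
    (∫ y : EuclideanSpace ℝ (Fin d),
        Real.exp (-(f x) - ⟪gradient f x, y - x⟫ - ‖y - x‖ ^ 2 / (2 * eta))) ≤
      (1 + eta * L) ^ ((d : ℝ) / 2) *
        Real.exp (eta ^ 2 * L / (2 * (1 + eta * L)) * ‖gradient f x‖ ^ 2) *
        ∫ y : EuclideanSpace ℝ (Fin d), Real.exp (-(f y) - ‖y - x‖ ^ 2 / (2 * eta)) := by
  set g := gradient f x with hg
  set b1 : ℝ := (2*eta)⁻¹ with hb1
  set b2 : ℝ := (2*eta)⁻¹ + L/2 with hb2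
  have hb1pos : 0 < b1 := by rw [hb1]; positivity
  have hb2pos : 0 < b2 := by rw [hb2]; positivity
  have hA : 0 < 1 + eta * L := by positivity
  have heta' : eta ≠ 0 := ne_of_gt heta
  have hA' : (1 : ℝ) + eta * L ≠ 0 := ne_of_gt hA
  -- numerator computation
  have e1 : ∀ y : EuclideanSpace ℝ (Fin d),
      Real.exp (-(f x) - ⟪g, y - x⟫ - ‖y - x‖ ^ 2 / (2 * eta))
        = Real.exp (-(f x)) * Real.exp (-⟪g, y - x⟫ - b1 * ‖y - x‖ ^ 2) := by
    intro y
    rw [← Real.exp_add, hb1]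
    congr 1
    field_simp
    ring
  have hN : (∫ y : EuclideanSpace ℝ (Fin d),
      Real.exp (-(f x) - ⟪g, y - x⟫ - ‖y - x‖ ^ 2 / (2 * eta)))
        = Real.exp (-(f x)) * ((π / b1) ^ ((d:ℝ)/2) * Real.exp (‖g‖ ^ 2 / (4*b1))) := by
    simp_rw [e1]
    rw [MeasureTheory.integral_const_mul, gauss_eq b1 hb1pos g x]
  -- lower bound on the denominator
  set m : EuclideanSpace ℝ (Fin d) → ℝ :=
    fun y => Real.exp (-(f x)) * Real.exp (-⟪g, y - x⟫ - b2 * ‖y - x‖ ^ 2) with hm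
  have hm_int : Integrable m := (gauss_integrable b2 hb2pos g x).const_mul _
  have hle : ∀ y, m y ≤ Real.exp (-(f y) - ‖y - x‖ ^ 2 / (2 * eta)) := by
    intro y
    show Real.exp (-(f x)) * Real.exp (-⟪g, y - x⟫ - b2 * ‖y - x‖ ^ 2)
      ≤ Real.exp (-(f y) - ‖y - x‖ ^ 2 / (2 * eta))
    rw [← Real.exp_add]
    apply Real.exp_le_exp.mpr
    have hdiv : ‖y - x‖ ^ 2 / (2 * eta) = (2 * eta)⁻¹ * ‖y - x‖ ^ 2 := by ring
    have := hsm x y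
    rw [← hg] at this
    rw [hb2, hdiv]
    nlinarith [this]
  have hD_int : Integrable (fun y : EuclideanSpace ℝ (Fin d) =>
      Real.exp (-(f y) - ‖y - x‖ ^ 2 / (2 * eta))) := by
    refine ((gauss_integrable b1 hb1pos g x).const_mul (Real.exp (-(f x)))).mono ?_ ?_
    · exact (Real.continuous_exp.comp ((hdiff.continuous.neg).sub
        (((continuous_id.sub continuous_const).norm.pow 2).div_const _))).aestronglyMeasurable
    · refine Filter.Eventually.of_forall fun y => ?_
      rw [Real.norm_eq_abs, Real.norm_eq_abs, abs_of_pos (Real.exp_pos _),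
        abs_of_pos (by positivity), ← Real.exp_add]
      apply Real.exp_le_exp.mpr
      have hgi := grad_ineq f hconv hdiff x y
      rw [← hg] at hgi
      have hdiv : ‖y - x‖ ^ 2 / (2 * eta) = (2 * eta)⁻¹ * ‖y - x‖ ^ 2 := by ring
      rw [hb1, hdiv]
      linarith
  have hMle : Real.exp (-(f x)) * ((π / b2) ^ ((d:ℝ)/2) * Real.exp (‖g‖ ^ 2 / (4*b2)))
      ≤ ∫ y : EuclideanSpace ℝ (Fin d), Real.exp (-(f y) - ‖y - x‖ ^ 2 / (2 * eta)) := by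
    have h1 : (∫ y, m y)
        = Real.exp (-(f x)) * ((π / b2) ^ ((d:ℝ)/2) * Real.exp (‖g‖ ^ 2 / (4*b2))) := by
      simp only [hm]
      rw [MeasureTheory.integral_const_mul, gauss_eq b2 hb2pos g x]
    rw [← h1]
    exact integral_mono hm_int hD_int hle
  -- final algebra
  have hpow : (π / b1) ^ ((d:ℝ)/2)
      = (1 + eta * L) ^ ((d:ℝ)/2) * (π / b2) ^ ((d:ℝ)/2) := by
    rw [← Real.mul_rpow (le_of_lt hA) (by positivity)]
    congr 1
    rw [hb1, hb2]
    field_simp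
  have hexp : ‖g‖ ^ 2 / (4*b1)
      = eta ^ 2 * L / (2 * (1 + eta * L)) * ‖g‖ ^ 2 + ‖g‖ ^ 2 / (4*b2) := by
    rw [hb1, hb2]
    field_simp
    ring
  rw [hN]
  calc Real.exp (-(f x)) * ((π / b1) ^ ((d:ℝ)/2) * Real.exp (‖g‖ ^ 2 / (4*b1)))
      = (1 + eta * L) ^ ((d:ℝ)/2) * Real.exp (eta ^ 2 * L / (2 * (1 + eta * L)) * ‖g‖ ^ 2) *
          (Real.exp (-(f x)) * ((π / b2) ^ ((d:ℝ)/2) * Real.exp (‖g‖ ^ 2 / (4*b2)))) := by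
        rw [hpow, hexp, Real.exp_add]
        ring
    _ ≤ (1 + eta * L) ^ ((d:ℝ)/2) * Real.exp (eta ^ 2 * L / (2 * (1 + eta * L)) * ‖g‖ ^ 2) *
          ∫ y : EuclideanSpace ℝ (Fin d), Real.exp (-(f y) - ‖y - x‖ ^ 2 / (2 * eta)) := by
        apply mul_le_mul_of_nonneg_left hMle
        positivity
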